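/- Let 𝕜 be ℝ or ℂ, H an n-dimensional inner product space over 𝕜 with orthonormal basis (h₁,…,h_n), 1 ≤ n₁ < ⋯ < n_q < n, and σ = (σ₁,…,σ_q) a general Schubert symbol of type (n₁,…,n_q,n). Then the map p(n₁,…,n_q,H) : V(n₁,…,n_q,H) → G(n₁,…,n_q,H), sending (v₁,…,v_q) to (Im v₁,…,Im v_q), (1) is injective on V_σ(n₁,…,n_q,H), and (2) satisfies p(n₁,…,n_q,H)(V_σ(n₁,…,n_q,H)) ∩ p(n₁,…,n_q,H)(∂V_σ(n₁,…,n_q,H)) = ∅. -/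

import Mathlib

open scoped InnerProductSpace

noncomputable section

/-- `e` is an open cell in `X` with characteristic map `f : Dⁿ → X`:
`f` is continuous on the closed unit ball, and restricts to a homeomorphism
(i.e. an embedding) of the open unit ball onto `e`. -/
def IsCellMap {X : Type*} [TopologicalSpace X] {n : ℕ}
    (f : EuclideanSpace ℝ (Fin n) → X) (e : Set X) : Prop :=
  ContinuousOn f (Metric.closedBall 0 1) ∧
  Topology.IsEmbedding ((Metric.ball (0 : EuclideanSpace ℝ (Fin n)) 1).restrict f) ∧
  f '' Metric.ball 0 1 = e

/-- `e` is an open cell of dimension `n` in `X`. -/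
def IsOpenCell {X : Type*} [TopologicalSpace X] (e : Set X) (n : ℕ) : Prop :=
  ∃ f : EuclideanSpace ℝ (Fin n) → X, IsCellMap f e

/-- The Stiefel manifold of inner-product-preserving linear maps `𝕜ⁿ → N`,
topologized as a subspace of the normed space of continuous linear maps. -/
abbrev Stiefel (𝕜 : Type*) [RCLike 𝕜] (n : ℕ) (N : Type*) [NormedAddCommGroup N]
    [InnerProductSpace 𝕜 N] : Type _ :=
  { u : EuclideanSpace 𝕜 (Fin n) →L[𝕜] N // ∀ x y, (inner 𝕜 (u x) (u y) : 𝕜) = inner 𝕜 x y }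

variable (𝕜 : Type*) [RCLike 𝕜]

/-- `E_k`: the span of the first `k+1` standard basis vectors (`0`-based index `k`). -/
def Ek (n : ℕ) (k : Fin n) : Submodule 𝕜 (EuclideanSpace 𝕜 (Fin n)) :=
  Submodule.span 𝕜 {x | ∃ i : Fin n, i ≤ k ∧ x = EuclideanSpace.single i (1 : 𝕜)}

/-- The Schubert cell `V_σ(n,N)` in the Stiefel manifold, relative to the orthonormal
basis `b` of `N`. -/
def VCell {n m : ℕ} {N : Type*} [NormedAddCommGroup N] [InnerProductSpace 𝕜 N]
    (b : OrthonormalBasis (Fin m) 𝕜 N) (σ : Fin n → Fin m) : Set (Stiefel 𝕜 n N) :=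
  { u | ∀ k : Fin n,
      (∀ x ∈ Ek 𝕜 n k, u.1 x ∈ Submodule.span 𝕜 (⇑b '' {j : Fin m | j ≤ σ k})) ∧
      ∃ r : ℝ, 0 < r ∧ (inner 𝕜 (u.1 (EuclideanSpace.single k (1 : 𝕜))) (b (σ k)) : 𝕜) = (r : 𝕜) }

/-- The dimension `d(σ) = Σₖ (σ(k) - k)` of an elementary Schubert symbol. -/
def dSigma {n m : ℕ} (σ : Fin n → Fin m) : ℕ := ∑ k : Fin n, ((σ k : ℕ) - (k : ℕ))

/-- The equivalence relation on `V(n,H)` identifying maps with the same image. -/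
def grassmannSetoid (n : ℕ) (H : Type*) [NormedAddCommGroup H] [InnerProductSpace 𝕜 H] :
    Setoid (Stiefel 𝕜 n H) :=
  ⟨fun u v => LinearMap.range (u.1 : EuclideanSpace 𝕜 (Fin n) →ₗ[𝕜] H) = LinearMap.range (v.1 : EuclideanSpace 𝕜 (Fin n) →ₗ[𝕜] H),
   ⟨fun _ => rfl, Eq.symm, Eq.trans⟩⟩

/-- The Grassmann manifold `G(n,H)` with the quotient topology. -/
abbrev Grassmann (n : ℕ) (H : Type*) [NormedAddCommGroup H] [InnerProductSpace 𝕜 H] : Type _ :=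
  Quotient (grassmannSetoid 𝕜 n H)

/-- A point of `G(n,H)` as an `n`-dimensional subspace of `H`. -/
def Grassmann.rangeOf {n : ℕ} {H : Type*} [NormedAddCommGroup H] [InnerProductSpace 𝕜 H] :
    Grassmann 𝕜 n H → Submodule 𝕜 H :=
  Quotient.lift (fun u => LinearMap.range u.1.toLinearMap) (fun _ _ h => h)

/-- The (1-based) Schubert symbol `σ_X(k) = min { i : dim (X ∩ F i) ≥ k }` of a
subspace `X` relative to a flag `F`. -/
def schubertSigma {K W : Type*} [Ring K] [AddCommGroup W] [Module K W]
    (X : Submodule K W) (F : ℕ → Submodule K W) (k : ℕ) : ℕ :=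
  sInf {i : ℕ | k ≤ Module.finrank K ↥(X ⊓ F i)}

/-- The complete flag associated to an (ordered) orthonormal basis:
`basisFlag b i = span(b₁, …, b_i)` (1-based `i`). -/
def basisFlag {m : ℕ} {N : Type*} [NormedAddCommGroup N] [InnerProductSpace 𝕜 N]
    (b : OrthonormalBasis (Fin m) 𝕜 N) (i : ℕ) : Submodule 𝕜 N :=
  Submodule.span 𝕜 (⇑b '' {j : Fin m | (j : ℕ) < i})

/-- The Schubert cell `G_σ(n,H)` inside the Grassmannian of `n`-dimensional
subspaces of `H`, viewed as a set of submodules. -/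
def GCellSub {n m : ℕ} {H : Type*} [NormedAddCommGroup H] [InnerProductSpace 𝕜 H]
    (b : OrthonormalBasis (Fin m) 𝕜 H) (σ : Fin n → Fin m) : Set (Submodule 𝕜 H) :=
  { X | Module.finrank 𝕜 ↥X = n ∧
        ∀ k : Fin n, schubertSigma X (basisFlag 𝕜 b) ((k : ℕ) + 1) = (σ k : ℕ) + 1 }

/-- The Schubert cell `G_σ(n,H)` as a subset of the Grassmann manifold. -/
def GCell {n m : ℕ} {H : Type*} [NormedAddCommGroup H] [InnerProductSpace 𝕜 H]
    (b : OrthonormalBasis (Fin m) 𝕜 H) (σ : Fin n → Fin m) : Set (Grassmann 𝕜 n H) :=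
  { x | ∀ k : Fin n,
      schubertSigma (Grassmann.rangeOf 𝕜 x) (basisFlag 𝕜 b) ((k : ℕ) + 1) = (σ k : ℕ) + 1 }

/-- Composition of inner-product-preserving maps. -/
def scomp {n q : ℕ} {N : Type*} [NormedAddCommGroup N] [InnerProductSpace 𝕜 N]
    (v : Stiefel 𝕜 q N) (u : Stiefel 𝕜 n (EuclideanSpace 𝕜 (Fin q))) : Stiefel 𝕜 n N :=
  ⟨v.1.comp u.1, fun x y => by
    simp only [ContinuousLinearMap.comp_apply]
    rw [v.2, u.2]⟩

/-- The identity as an inner-product-preserving map. -/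
def sid (n : ℕ) : Stiefel 𝕜 n (EuclideanSpace 𝕜 (Fin n)) :=
  ⟨ContinuousLinearMap.id 𝕜 _, fun _ _ => rfl⟩


section Chains

variable (𝕜 : Type*) [RCLike 𝕜]

/-- Iterated composition `u_{j-1} ∘ ⋯ ∘ u_1 ∘ u_0` of a chain of
inner-product-preserving maps (`0`-based). -/
def chainComp (m : ℕ → ℕ)
    (u : ∀ i : ℕ, Stiefel 𝕜 (m i) (EuclideanSpace 𝕜 (Fin (m (i+1))))) :
    (j : ℕ) → Stiefel 𝕜 (m 0) (EuclideanSpace 𝕜 (Fin (m j)))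
  | 0 => sid 𝕜 (m 0)
  | (j+1) => scomp 𝕜 (u j) (chainComp m u j)

/-- Iterated composition `τ_{j-1} ∘ ⋯ ∘ τ_1 ∘ τ_0` of a chain of Schubert symbols. -/
def symbComp (m : ℕ → ℕ) (τ : ∀ i : ℕ, Fin (m i) → Fin (m (i+1))) :
    (j : ℕ) → Fin (m 0) → Fin (m j)
  | 0 => id
  | (j+1) => τ j ∘ symbComp m τ j

end Chains

section Flags

variable (𝕜 : Type*) [RCLike 𝕜]

/-- The generalized Stiefel manifold `V(n₁,…,n_q,H)` (with `q = Q+1`,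
`nn k = n_{k+1}` 0-based): tuples of isometric embeddings with nested images. -/
abbrev FlagStiefel (nn : ℕ → ℕ) (Q : ℕ) (H : Type*) [NormedAddCommGroup H]
    [InnerProductSpace 𝕜 H] : Type _ :=
  { v : ∀ k : Fin (Q+1), Stiefel 𝕜 (nn k.1) H //
      ∀ k l : Fin (Q+1), k ≤ l → LinearMap.range (v k).1.toLinearMap ≤ LinearMap.range (v l).1.toLinearMap }

/-- A general Schubert symbol of type `(n₁,…,n_q, n)` (with `q = Q+1`,
`nn k = n_{k+1}` 0-based and `nn (Q+1) = n`). -/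
abbrev SymbolFamily (nn : ℕ → ℕ) (Q : ℕ) : Type _ :=
  ∀ k : Fin (Q+1), Fin (nn k.1) → Fin (nn (k.1+1))

/-- The dimension `d(σ) = Σ_k Σ_i (σ_k(i) − i)` of a general Schubert symbol. -/
def dGen {nn : ℕ → ℕ} {Q : ℕ} (σ : SymbolFamily nn Q) : ℕ :=
  ∑ k : Fin (Q+1), ∑ i : Fin (nn k.1), ((σ k i : ℕ) - (i : ℕ))

/-- The cell `V_σ(n₁,…,n_q,H)`: the image under the composition homeomorphism `ψ`
of the product of the cells `V_{σ_k}(n_k, n_{k+1})` and `V_{σ_q}(n_q, H)`. -/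
def GenVCell (nn : ℕ → ℕ) (Q : ℕ) {H : Type*} [NormedAddCommGroup H]
    [InnerProductSpace 𝕜 H] (b : OrthonormalBasis (Fin (nn (Q+1))) 𝕜 H)
    (σ : SymbolFamily nn Q) : Set (FlagStiefel 𝕜 nn Q H) :=
  { v | v.1 (Fin.last Q) ∈ VCell 𝕜 b (σ (Fin.last Q)) ∧
      ∃ u : ∀ k : ℕ, Stiefel 𝕜 (nn k) (EuclideanSpace 𝕜 (Fin (nn (k+1)))),
        (∀ (k : ℕ) (h : k < Q),
            u k ∈ VCell 𝕜 (EuclideanSpace.basisFun (Fin (nn (k+1))) 𝕜)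
              (σ ⟨k, Nat.lt_succ_of_lt h⟩)) ∧
        ∀ (k : ℕ) (h : k < Q),
          v.1 ⟨k, Nat.lt_succ_of_lt h⟩ = scomp 𝕜 (v.1 ⟨k+1, Nat.succ_lt_succ h⟩) (u k) }

/-- The flag manifold `G(n₁,…,n_q,H)` as a subspace of the product of Grassmannians. -/
abbrev FlagManifold (nn : ℕ → ℕ) (Q : ℕ) (H : Type*) [NormedAddCommGroup H]
    [InnerProductSpace 𝕜 H] : Type _ :=
  { x : ∀ k : Fin (Q+1), Grassmann 𝕜 (nn k.1) H //
      ∀ k l : Fin (Q+1), k ≤ l → Grassmann.rangeOf 𝕜 (x k) ≤ Grassmann.rangeOf 𝕜 (x l) }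

/-- The quotient map `p(n₁,…,n_q,H) : V(n₁,…,n_q,H) → G(n₁,…,n_q,H)`. -/
def flagQuot (nn : ℕ → ℕ) (Q : ℕ) {H : Type*} [NormedAddCommGroup H]
    [InnerProductSpace 𝕜 H] (v : FlagStiefel 𝕜 nn Q H) : FlagManifold 𝕜 nn Q H :=
  ⟨fun k => Quotient.mk (grassmannSetoid 𝕜 (nn k.1) H) (v.1 k), fun k l h => v.2 k l h⟩

end Flags

section Induced

variable {K W : Type*} [Ring K] [AddCommGroup W] [Module K W]

/-- Iterated induced flags: `indFlag Q F0 Xn 0 = F0` is the complete flag on the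
ambient space, and `indFlag Q F0 Xn (j+1)` is the complete flag induced on
`Xn (Q-j)` by the flag `indFlag Q F0 Xn j` on the next space. -/
def indFlag (Q : ℕ) (F0 : ℕ → Submodule K W) (Xn : ℕ → Submodule K W) :
    ℕ → ℕ → Submodule K W
  | 0 => F0
  | (j+1) => fun i =>
      Xn (Q - j) ⊓ indFlag Q F0 Xn j (schubertSigma (Xn (Q - j)) (indFlag Q F0 Xn j) i)

/-- The `k`-th component of the Schubert symbol of the flag `Xn`: the Schubert symbol of
`Xn k` inside the completely flagged space `Xn (k+1)` (the ambient space when `k = Q`). -/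
def flagSymbol (Q : ℕ) (F0 : ℕ → Submodule K W) (Xn : ℕ → Submodule K W) (k i : ℕ) : ℕ :=
  schubertSigma (Xn k) (indFlag Q F0 Xn (Q - k)) i

end Induced

section FlagCells

variable (𝕜 : Type*) [RCLike 𝕜]

/-- A tuple of submodules, extended by `⊤` (the ambient space) beyond index `Q`. -/
def tupleExt {Q : ℕ} {H : Type*} [NormedAddCommGroup H] [InnerProductSpace 𝕜 H]
    (Xt : ∀ _ : Fin (Q+1), Submodule 𝕜 H) (j : ℕ) : Submodule 𝕜 H :=
  if h : j < Q + 1 then Xt ⟨j, h⟩ else ⊤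

/-- The set `G(n₁,…,n_q,H)` of flags, as tuples of submodules. -/
def GFlagSet (nn : ℕ → ℕ) (Q : ℕ) (H : Type*) [NormedAddCommGroup H]
    [InnerProductSpace 𝕜 H] : Set (∀ _ : Fin (Q+1), Submodule 𝕜 H) :=
  { Xt | (∀ k : Fin (Q+1), Module.finrank 𝕜 ↥(Xt k) = nn k.1) ∧
      ∀ k l : Fin (Q+1), k ≤ l → Xt k ≤ Xt l }

/-- The Schubert cell `G_σ(n₁,…,n_q,H)`, as a set of tuples of submodules. -/
def GFlagCellSub (nn : ℕ → ℕ) (Q : ℕ) {H : Type*} [NormedAddCommGroup H]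
    [InnerProductSpace 𝕜 H] (b : OrthonormalBasis (Fin (nn (Q+1))) 𝕜 H)
    (σ : SymbolFamily nn Q) : Set (∀ _ : Fin (Q+1), Submodule 𝕜 H) :=
  { Xt | Xt ∈ GFlagSet 𝕜 nn Q H ∧
      ∀ (k : Fin (Q+1)) (i : Fin (nn k.1)),
        flagSymbol Q (basisFlag 𝕜 b) (tupleExt 𝕜 Xt) k.1 (i.1+1) = (σ k i : ℕ) + 1 }

/-- The Schubert cell `G_σ(n₁,…,n_q,H)` as a subset of the flag manifold. -/
def GFlagCellQ (nn : ℕ → ℕ) (Q : ℕ) {H : Type*} [NormedAddCommGroup H]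
    [InnerProductSpace 𝕜 H] (b : OrthonormalBasis (Fin (nn (Q+1))) 𝕜 H)
    (σ : SymbolFamily nn Q) : Set (FlagManifold 𝕜 nn Q H) :=
  { x | ∀ (k : Fin (Q+1)) (i : Fin (nn k.1)),
      flagSymbol Q (basisFlag 𝕜 b)
        (tupleExt 𝕜 (fun l => Grassmann.rangeOf 𝕜 (x.1 l))) k.1 (i.1+1) = (σ k i : ℕ) + 1 }

end FlagCells

section AuxLemmas

variable {𝕜 : Type*} [RCLike 𝕜]

/-- The flag subspace spanned by the basis vectors indexed `≤ j`. -/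
def Fl {m : ℕ} {N : Type*} [NormedAddCommGroup N] [InnerProductSpace 𝕜 N]
    (b : OrthonormalBasis (Fin m) 𝕜 N) (j : Fin m) : Submodule 𝕜 N :=
  Submodule.span 𝕜 (⇑b '' {i : Fin m | i ≤ j})

lemma mem_Fl {m : ℕ} {N : Type*} [NormedAddCommGroup N] [InnerProductSpace 𝕜 N]
    (b : OrthonormalBasis (Fin m) 𝕜 N) {i j : Fin m} (h : i ≤ j) : b i ∈ Fl b j :=
  Submodule.subset_span ⟨i, h, rfl⟩

lemma inner_Fl_eq_zero {m : ℕ} {N : Type*} [NormedAddCommGroup N] [InnerProductSpace 𝕜 N]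
    (b : OrthonormalBasis (Fin m) 𝕜 N) {j l : Fin m} (h : j < l) {x : N}
    (hx : x ∈ Fl b j) : ⟪x, b l⟫_𝕜 = 0 := by
  induction hx using Submodule.span_induction with
  | mem y hy =>
    obtain ⟨i, hi, rfl⟩ := hy
    exact b.orthonormal.2 (ne_of_lt (lt_of_le_of_lt hi h))
  | zero => exact inner_zero_left _
  | add y z _ _ hy hz => rw [inner_add_left, hy, hz, add_zero]
  | smul a y _ hy => rw [inner_smul_left, hy, mul_zero]

/-- The `k`-th column of a Stiefel element. -/
def Stiefel.col {n : ℕ} {N : Type*} [NormedAddCommGroup N] [InnerProductSpace 𝕜 N]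
    (u : Stiefel 𝕜 n N) (k : Fin n) : N :=
  u.1 (EuclideanSpace.single k (1 : 𝕜))

lemma Stiefel.inner_col {n : ℕ} {N : Type*} [NormedAddCommGroup N] [InnerProductSpace 𝕜 N]
    (u : Stiefel 𝕜 n N) (i j : Fin n) :
    ⟪u.col i, u.col j⟫_𝕜 = if j = i then 1 else 0 := by
  rw [Stiefel.col, Stiefel.col, u.2, EuclideanSpace.inner_single_left]
  simp [EuclideanSpace.single_apply, eq_comm]

lemma Stiefel.range_eq {n : ℕ} {N : Type*} [NormedAddCommGroup N] [InnerProductSpace 𝕜 N]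
    (u : Stiefel 𝕜 n N) :
    LinearMap.range u.1.toLinearMap = Submodule.span 𝕜 (Set.range u.col) := by
  apply le_antisymm
  · rintro x ⟨y, rfl⟩
    have hy : ∑ i, y i • EuclideanSpace.single i (1 : 𝕜) = y := by
      have := (EuclideanSpace.basisFun (Fin n) 𝕜).toBasis.sum_repr y
      simpa [EuclideanSpace.basisFun_repr] using this
    rw [← hy, map_sum]
    refine Submodule.sum_mem _ fun i _ => ?_
    rw [map_smul]
    exact Submodule.smul_mem _ _ (Submodule.subset_span ⟨i, rfl⟩)
  · rw [Submodule.span_le]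
    rintro x ⟨i, rfl⟩
    exact ⟨EuclideanSpace.single i 1, rfl⟩

lemma single_mem_Ek {n : ℕ} {i k : Fin n} (h : i ≤ k) :
    EuclideanSpace.single i (1 : 𝕜) ∈ Ek 𝕜 n k :=
  Submodule.subset_span ⟨i, h, rfl⟩

/-- The "closed" version of the Schubert cell conditions. -/
def CCell {n m : ℕ} {N : Type*} [NormedAddCommGroup N] [InnerProductSpace 𝕜 N]
    (b : OrthonormalBasis (Fin m) 𝕜 N) (τ : Fin n → Fin m) : Set (Stiefel 𝕜 n N) :=
  { u | ∀ k : Fin n, u.col k ∈ Fl b (τ k) ∧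
      0 ≤ RCLike.re ⟪u.col k, b (τ k)⟫_𝕜 ∧ RCLike.im ⟪u.col k, b (τ k)⟫_𝕜 = 0 }

lemma VCell_subset_CCell {n m : ℕ} {N : Type*} [NormedAddCommGroup N]
    [InnerProductSpace 𝕜 N] (b : OrthonormalBasis (Fin m) 𝕜 N) (τ : Fin n → Fin m) :
    VCell 𝕜 b τ ⊆ CCell b τ := by
  intro u hu k
  obtain ⟨h1, r, hr, hir⟩ := hu k
  refine ⟨h1 _ (single_mem_Ek le_rfl), ?_, ?_⟩
  · rw [Stiefel.col, hir]; simp [le_of_lt hr]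
  · rw [Stiefel.col, hir]; simp

lemma isClosed_CCell {n m : ℕ} {N : Type*} [NormedAddCommGroup N]
    [InnerProductSpace 𝕜 N] [FiniteDimensional 𝕜 N]
    (b : OrthonormalBasis (Fin m) 𝕜 N) (τ : Fin n → Fin m) :
    IsClosed (CCell b τ : Set (Stiefel 𝕜 n N)) := by
  have hcol : ∀ k : Fin n, Continuous fun u : Stiefel 𝕜 n N => u.col k := fun k =>
    (continuous_subtype_val.clm_apply continuous_const : _)
  have : (CCell b τ : Set (Stiefel 𝕜 n N)) =
      ⋂ k : Fin n, ((fun u : Stiefel 𝕜 n N => u.col k) ⁻¹' (Fl b (τ k) : Set N)) ∩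
        ({u : Stiefel 𝕜 n N | 0 ≤ RCLike.re ⟪u.col k, b (τ k)⟫_𝕜} ∩
         {u : Stiefel 𝕜 n N | RCLike.im ⟪u.col k, b (τ k)⟫_𝕜 = 0}) := by
    ext u; simp [CCell, Set.mem_iInter, and_assoc]
  rw [this]
  refine isClosed_iInter fun k => ((Fl b (τ k)).closed_of_finiteDimensional.preimage
    (hcol k)).inter (IsClosed.inter ?_ ?_)
  · exact isClosed_le continuous_const
      (RCLike.continuous_re.comp ((hcol k).inner continuous_const))
  · exact isClosed_eq (RCLike.continuous_im.comp ((hcol k).inner continuous_const))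
      continuous_const

end AuxLemmas
section Rigidity

variable {𝕜 : Type*} [RCLike 𝕜]

lemma sum_single_smul {n : ℕ} (y : EuclideanSpace 𝕜 (Fin n)) :
    ∑ i, y i • EuclideanSpace.single i (1 : 𝕜) = y := by
  have := (EuclideanSpace.basisFun (Fin n) 𝕜).toBasis.sum_repr y
  simpa [EuclideanSpace.basisFun_repr] using this

lemma col_eq_of_CCell {n m : ℕ} {N : Type*} [NormedAddCommGroup N] [InnerProductSpace 𝕜 N]
    (b : OrthonormalBasis (Fin m) 𝕜 N) {τ : Fin n → Fin m} (hτ : StrictMono τ)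
    {u u' : Stiefel 𝕜 n N} (hu : u ∈ CCell b τ) (hu' : u' ∈ VCell 𝕜 b τ)
    (hr : LinearMap.range u.1.toLinearMap = LinearMap.range u'.1.toLinearMap)
    (k : Fin n) (hprev : ∀ j : Fin n, j < k → u.col j = u'.col j) :
    u.col k = u'.col k := by
  have memF' : ∀ j, u'.col j ∈ Fl b (τ j) := fun j => (hu' j).1 _ (single_mem_Ek le_rfl)
  have hpiv : ∀ j, ∃ r : ℝ, 0 < r ∧ ⟪u'.col j, b (τ j)⟫_𝕜 = (r : 𝕜) := fun j => (hu' j).2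
  -- express the k-th column of u in terms of the columns of u'
  have hmem : u.col k ∈ Submodule.span 𝕜 (Set.range u'.col) := by
    rw [← u'.range_eq, ← hr]
    exact ⟨EuclideanSpace.single k 1, rfl⟩
  obtain ⟨c, hc⟩ := (Submodule.mem_span_range_iff_exists_fun 𝕜).1 hmem
  -- coefficients above k vanish (descending induction)
  have hhigh : ∀ d : ℕ, ∀ i : Fin n, n ≤ d + i.1 → k < i → c i = 0 := by
    intro d
    induction d with
    | zero =>
      intro i hi _
      exact absurd hi (by have := i.isLt; omega)
    | succ d ih =>
      intro i hi hki
      have h0 : ⟪u.col k, b (τ i)⟫_𝕜 = 0 := inner_Fl_eq_zero b (hτ hki) (hu k).1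
      rw [← hc, sum_inner] at h0
      have hterm : ∀ j ∈ Finset.univ, j ≠ i → ⟪c j • u'.col j, b (τ i)⟫_𝕜 = 0 := by
        intro j _ hj
        rcases lt_or_gt_of_ne hj with hlt | hgt
        · rw [inner_smul_left, inner_Fl_eq_zero b (hτ hlt) (memF' j), mul_zero]
        · have hij : i.1 < j.1 := hgt
          rw [ih j (by omega) (lt_trans hki hgt)]; simp
      rw [Finset.sum_eq_single_of_mem i (Finset.mem_univ i) hterm] at h0
      obtain ⟨ri, hri, hri'⟩ := hpiv i
      rw [inner_smul_left, hri'] at h0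
      rcases mul_eq_zero.1 h0 with h | h
      · exact star_eq_zero.1 h
      · exact absurd (RCLike.ofReal_eq_zero.1 h) (ne_of_gt hri)
  -- coefficients below k vanish
  have hvanish : ∀ j, j ≠ k → c j = 0 := by
    intro j hj
    rcases lt_or_gt_of_ne hj with hlt | hgt
    · have h1 : ⟪u'.col j, u.col k⟫_𝕜 = c j := by
        rw [← hc, inner_sum]
        rw [Finset.sum_eq_single_of_mem j (Finset.mem_univ j) (fun i _ hij => by
          rw [inner_smul_right, u'.inner_col, if_neg hij, mul_zero])]
        rw [inner_smul_right, u'.inner_col, if_pos rfl, mul_one]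
      rw [← hprev j hlt, u.inner_col, if_neg (ne_of_gt hlt)] at h1
      exact h1.symm
    · have := hgt.le; have hjn := j.isLt
      exact hhigh n j (by omega) hgt
  have hck : u.col k = c k • u'.col k := by
    rw [← hc, Finset.sum_eq_single_of_mem k (Finset.mem_univ k)
      (fun j _ hj => by rw [hvanish j hj, zero_smul])]
  -- now c k = 1
  obtain ⟨r', hr'pos, hr'⟩ := hpiv k
  have h1 : ⟪u.col k, b (τ k)⟫_𝕜 = (starRingEnd 𝕜) (c k) * (r' : 𝕜) := by
    rw [hck, inner_smul_left, hr']
  have him := (hu k).2.2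
  have hre := (hu k).2.1
  rw [h1] at him hre
  have himc : RCLike.im (c k) = 0 := by
    rw [RCLike.mul_im, RCLike.ofReal_im, RCLike.ofReal_re, mul_zero, zero_add,
      RCLike.conj_im] at him
    have := mul_eq_zero.1 him
    rcases this with h | h
    · linarith [neg_eq_zero.1 h]
    · exact absurd h (ne_of_gt hr'pos)
  have hrec : 0 ≤ RCLike.re (c k) := by
    rw [RCLike.mul_re, RCLike.ofReal_im, RCLike.ofReal_re, mul_zero, sub_zero,
      RCLike.conj_re] at hre
    nlinarith [hre, hr'pos]
  have hconj : (starRingEnd 𝕜) (c k) = c k := RCLike.conj_eq_iff_im.2 himc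
  have hcc : c k * c k = 1 := by
    have hn : ⟪u.col k, u.col k⟫_𝕜 = 1 := by rw [u.inner_col, if_pos rfl]
    rw [hck, inner_smul_left, inner_smul_right, u'.inner_col, if_pos rfl, mul_one,
      hconj] at hn
    exact hn
  rcases mul_self_eq_one_iff.1 hcc with h | h
  · rw [hck, h, one_smul]
  · rw [h] at hrec
    norm_num at hrec
lemma CCell_eq_of_range_eq {n m : ℕ} {N : Type*} [NormedAddCommGroup N]
    [InnerProductSpace 𝕜 N] (b : OrthonormalBasis (Fin m) 𝕜 N) {τ : Fin n → Fin m}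
    (hτ : StrictMono τ) {u u' : Stiefel 𝕜 n N} (hu : u ∈ CCell b τ)
    (hu' : u' ∈ VCell 𝕜 b τ) (hr : LinearMap.range u.1.toLinearMap = LinearMap.range u'.1.toLinearMap) :
    u = u' := by
  have key : ∀ M : ℕ, ∀ k : Fin n, k.1 ≤ M → u.col k = u'.col k := by
    intro M
    induction M with
    | zero =>
      intro k hk
      exact col_eq_of_CCell b hτ hu hu' hr k (fun j hj =>
        absurd (lt_of_lt_of_le (show j.1 < k.1 from hj) hk) (Nat.not_lt_zero _))
    | succ M ih =>
      intro k hk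
      exact col_eq_of_CCell b hτ hu hu' hr k (fun j hj =>
        ih j (by have : j.1 < k.1 := hj; omega))
  have hcol : ∀ k, u.col k = u'.col k := fun k => key k.1 k le_rfl
  apply Subtype.ext
  apply ContinuousLinearMap.ext
  intro y
  rw [← sum_single_smul y, map_sum, map_sum]
  refine Finset.sum_congr rfl fun i _ => ?_
  rw [map_smul, map_smul]
  exact congrArg _ (hcol i)

lemma Stiefel.adjoint_apply {n : ℕ} {N : Type*} [NormedAddCommGroup N]
    [InnerProductSpace 𝕜 N] [CompleteSpace N] (w : Stiefel 𝕜 n N)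
    (x : EuclideanSpace 𝕜 (Fin n)) :
    ContinuousLinearMap.adjoint w.1 (w.1 x) = x := by
  apply ext_inner_right 𝕜
  intro y
  rw [ContinuousLinearMap.adjoint_inner_left]
  exact w.2 x y

lemma stiefel_adj_comp_inner {p q : ℕ} {N : Type*} [NormedAddCommGroup N]
    [InnerProductSpace 𝕜 N] [CompleteSpace N] (w : Stiefel 𝕜 q N) (vk : Stiefel 𝕜 p N)
    (hle : LinearMap.range vk.1.toLinearMap ≤ LinearMap.range w.1.toLinearMap) (x y : EuclideanSpace 𝕜 (Fin p)) :
    ⟪((ContinuousLinearMap.adjoint w.1).comp vk.1) x,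
      ((ContinuousLinearMap.adjoint w.1).comp vk.1) y⟫_𝕜 = ⟪x, y⟫_𝕜 := by
  obtain ⟨a, ha : w.1 a = vk.1 x⟩ := hle ⟨x, rfl⟩
  obtain ⟨a', ha' : w.1 a' = vk.1 y⟩ := hle ⟨y, rfl⟩
  simp only [ContinuousLinearMap.comp_apply]
  rw [← ha, ← ha', Stiefel.adjoint_apply, Stiefel.adjoint_apply]
  have h2 := w.2 a a'
  rw [ha, ha'] at h2
  rw [← h2]
  exact vk.2 x y

lemma stiefel_comp_adj_comp {p q : ℕ} {N : Type*} [NormedAddCommGroup N]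
    [InnerProductSpace 𝕜 N] [CompleteSpace N] (w : Stiefel 𝕜 q N) (vk : Stiefel 𝕜 p N)
    (hle : LinearMap.range vk.1.toLinearMap ≤ LinearMap.range w.1.toLinearMap) :
    w.1.comp ((ContinuousLinearMap.adjoint w.1).comp vk.1) = vk.1 := by
  apply ContinuousLinearMap.ext
  intro x
  obtain ⟨a, ha : w.1 a = vk.1 x⟩ := hle ⟨x, rfl⟩
  simp only [ContinuousLinearMap.comp_apply]
  rw [← ha, Stiefel.adjoint_apply]

end Rigidity

section FlagRigidity

variable {𝕜 : Type*} [RCLike 𝕜] {nn : ℕ → ℕ} {Q : ℕ} {H : Type*}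
  [NormedAddCommGroup H] [InnerProductSpace 𝕜 H] [CompleteSpace H]

/-- `(v_{k+1})^* ∘ v_k`, as a Stiefel element. -/
def chainAdj (v : FlagStiefel 𝕜 nn Q H) (k : ℕ) (hk : k < Q) :
    Stiefel 𝕜 (nn k) (EuclideanSpace 𝕜 (Fin (nn (k+1)))) :=
  ⟨(ContinuousLinearMap.adjoint (v.1 ⟨k+1, by omega⟩).1).comp (v.1 ⟨k, by omega⟩).1,
    stiefel_adj_comp_inner _ _ (v.2 ⟨k, by omega⟩ ⟨k+1, by omega⟩ (by simp [Fin.le_def]))⟩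

lemma chainAdj_recomp (v : FlagStiefel 𝕜 nn Q H) (k : ℕ) (hk : k < Q) :
    (v.1 ⟨k+1, by omega⟩).1.comp (chainAdj v k hk).1 = (v.1 ⟨k, by omega⟩).1 :=
  stiefel_comp_adj_comp _ _ (v.2 ⟨k, by omega⟩ ⟨k+1, by omega⟩ (by simp [Fin.le_def]))

lemma chainAdj_eq_of_comp (v : FlagStiefel 𝕜 nn Q H) (k : ℕ) (hk : k < Q)
    (u : Stiefel 𝕜 (nn k) (EuclideanSpace 𝕜 (Fin (nn (k+1)))))
    (hcomp : v.1 ⟨k, by omega⟩ = scomp 𝕜 (v.1 ⟨k+1, by omega⟩) u) :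
    chainAdj v k hk = u := by
  apply Subtype.ext
  apply ContinuousLinearMap.ext
  intro x
  show (ContinuousLinearMap.adjoint (v.1 ⟨k+1, by omega⟩).1) ((v.1 ⟨k, by omega⟩).1 x) = u.1 x
  rw [hcomp]
  show (ContinuousLinearMap.adjoint (v.1 ⟨k+1, by omega⟩).1)
    ((v.1 ⟨k+1, by omega⟩).1 (u.1 x)) = u.1 x
  rw [Stiefel.adjoint_apply]

end FlagRigidity
section FlagRigidity2

variable {𝕜 : Type*} [RCLike 𝕜] {nn : ℕ → ℕ} {Q : ℕ} {H : Type*}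
  [NormedAddCommGroup H] [InnerProductSpace 𝕜 H] [CompleteSpace H] [FiniteDimensional 𝕜 H]

/-- The closed superset of `GenVCell` cut out by the closed cell conditions. -/
def DSet (b : OrthonormalBasis (Fin (nn (Q+1))) 𝕜 H) (σ : SymbolFamily nn Q) :
    Set (FlagStiefel 𝕜 nn Q H) :=
  { v | v.1 (Fin.last Q) ∈ CCell b (σ (Fin.last Q)) ∧
      ∀ (k : ℕ) (hk : k < Q),
        chainAdj v k hk ∈ CCell (EuclideanSpace.basisFun (Fin (nn (k+1))) 𝕜)
          (σ ⟨k, by omega⟩) }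

lemma genVCell_subset_DSet (b : OrthonormalBasis (Fin (nn (Q+1))) 𝕜 H)
    (σ : SymbolFamily nn Q) : GenVCell 𝕜 nn Q b σ ⊆ DSet b σ := by
  rintro v ⟨hQ, u, hucell, hucomp⟩
  refine ⟨VCell_subset_CCell _ _ hQ, fun k hk => ?_⟩
  rw [chainAdj_eq_of_comp v k hk (u k) (hucomp k hk)]
  exact VCell_subset_CCell _ _ (hucell k hk)

lemma isClosed_DSet (b : OrthonormalBasis (Fin (nn (Q+1))) 𝕜 H) (σ : SymbolFamily nn Q) :
    IsClosed (DSet b σ) := by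
  have hcomp : ∀ (j : Fin (Q+1)), Continuous fun v : FlagStiefel 𝕜 nn Q H => (v.1 j).1 :=
    fun j => continuous_subtype_val.comp ((continuous_apply j).comp continuous_subtype_val)
  have h1 : IsClosed {v : FlagStiefel 𝕜 nn Q H |
      v.1 (Fin.last Q) ∈ CCell b (σ (Fin.last Q))} :=
    (isClosed_CCell b _).preimage ((continuous_apply (Fin.last Q)).comp continuous_subtype_val)
  have h2 : ∀ (k : ℕ) (hk : k < Q), IsClosed {v : FlagStiefel 𝕜 nn Q H |
      chainAdj v k hk ∈ CCell (EuclideanSpace.basisFun (Fin (nn (k+1))) 𝕜)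
        (σ ⟨k, by omega⟩)} := by
    intro k hk
    have c1 : Continuous fun v : FlagStiefel 𝕜 nn Q H => chainAdj v k hk := by
      refine Continuous.subtype_mk ?_ _
      exact Continuous.clm_comp
        ((ContinuousLinearMap.adjoint (𝕜 := 𝕜)
            (E := EuclideanSpace 𝕜 (Fin (nn (k+1)))) (F := H)).continuous.comp
          (hcomp ⟨k+1, by omega⟩))
        (hcomp ⟨k, by omega⟩)
    exact (isClosed_CCell _ _).preimage c1
  have heq : DSet b σ = {v : FlagStiefel 𝕜 nn Q H |
        v.1 (Fin.last Q) ∈ CCell b (σ (Fin.last Q))} ∩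
      ⋂ (k : ℕ), ⋂ (hk : k < Q), {v : FlagStiefel 𝕜 nn Q H |
        chainAdj v k hk ∈ CCell (EuclideanSpace.basisFun (Fin (nn (k+1))) 𝕜)
          (σ ⟨k, by omega⟩)} := by
    ext v
    simp only [DSet, Set.mem_inter_iff, Set.mem_iInter, Set.mem_setOf_eq]
  rw [heq]
  exact h1.inter (isClosed_iInter fun k => isClosed_iInter fun hk => h2 k hk)

lemma flag_rigid (b : OrthonormalBasis (Fin (nn (Q+1))) 𝕜 H) (σ : SymbolFamily nn Q)
    (hσ : ∀ k, StrictMono (σ k)) (v v' : FlagStiefel 𝕜 nn Q H)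
    (hv : v ∈ DSet b σ) (hv' : v' ∈ GenVCell 𝕜 nn Q b σ)
    (hr : ∀ k, LinearMap.range (v.1 k).1.toLinearMap = LinearMap.range (v'.1 k).1.toLinearMap) : v = v' := by
  obtain ⟨hQ', u', hu'cell, hu'comp⟩ := hv'
  have key : ∀ k : Fin (Q+1), v.1 k = v'.1 k := by
    intro k
    induction k using Fin.reverseInduction with
    | last => exact CCell_eq_of_range_eq b (hσ _) hv.1 hQ' (hr _)
    | cast i ih =>
      have hk : i.1 < Q := i.isLt
      have ih' : v.1 ⟨i.1+1, by omega⟩ = v'.1 ⟨i.1+1, by omega⟩ := ih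
      have hrk : LinearMap.range (v.1 (⟨i.1, by omega⟩ : Fin (Q+1))).1.toLinearMap
          = LinearMap.range (v'.1 ⟨i.1, by omega⟩).1.toLinearMap := hr _
      have hw := hv.2 i.1 hk
      have hchainv' : chainAdj v' i.1 hk = u' i.1 :=
        chainAdj_eq_of_comp v' i.1 hk (u' i.1) (hu'comp i.1 hk)
      have e1 : LinearMap.range (chainAdj v i.1 hk).1.toLinearMap
          = Submodule.map
            (((ContinuousLinearMap.adjoint (v.1 ⟨i.1+1, by omega⟩).1)
              : H →L[𝕜] EuclideanSpace 𝕜 (Fin (nn (i.1+1)))) : H →ₗ[𝕜] _)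
            (LinearMap.range (v.1 (⟨i.1, by omega⟩ : Fin (Q+1))).1.toLinearMap) :=
        LinearMap.range_comp _ _
      have e2 : LinearMap.range (chainAdj v' i.1 hk).1.toLinearMap
          = Submodule.map
            (((ContinuousLinearMap.adjoint (v'.1 ⟨i.1+1, by omega⟩).1)
              : H →L[𝕜] EuclideanSpace 𝕜 (Fin (nn (i.1+1)))) : H →ₗ[𝕜] _)
            (LinearMap.range (v'.1 (⟨i.1, by omega⟩ : Fin (Q+1))).1.toLinearMap) :=
        LinearMap.range_comp _ _
      have hrange : LinearMap.range (chainAdj v i.1 hk).1.toLinearMap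
          = LinearMap.range (chainAdj v' i.1 hk).1.toLinearMap := by
        rw [e1, e2, hrk, ih']
      have heq2 : chainAdj v i.1 hk = u' i.1 :=
        CCell_eq_of_range_eq _ (hσ _) hw (hu'cell i.1 hk) (by rw [hrange, hchainv'])
      apply Subtype.ext
      show (v.1 (⟨i.1, by omega⟩ : Fin (Q+1))).1 = (v'.1 ⟨i.1, by omega⟩).1
      rw [← chainAdj_recomp v i.1 hk, heq2, ih', hu'comp i.1 hk]
      rfl
  exact Subtype.ext (funext key)

end FlagRigidity2
/-- Lemma 6.2: the map `p(n₁,…,n_q,H) : (v₁,…,v_q) ↦ (Im v₁,…,Im v_q)` is injective on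
`V_σ(n₁,…,n_q,H)`, and the images under it of `V_σ(n₁,…,n_q,H)` and of
`∂V_σ(n₁,…,n_q,H)` are disjoint. -/
theorem genVCell_injOn_and_disjoint_images
    (𝕜 : Type*) [RCLike 𝕜] (H : Type*) [NormedAddCommGroup H] [InnerProductSpace 𝕜 H]
    [FiniteDimensional 𝕜 H] (nn : ℕ → ℕ) (Q : ℕ)
    (h0 : 0 < nn 0) (hchain : ∀ k ≤ Q, nn k < nn (k + 1))
    (b : OrthonormalBasis (Fin (nn (Q + 1))) 𝕜 H)
    (σ : SymbolFamily nn Q) (hσ : ∀ k, StrictMono (σ k)) :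
    Set.InjOn (fun v : FlagStiefel 𝕜 nn Q H => fun k : Fin (Q + 1) => LinearMap.range (v.1 k).1.toLinearMap)
      (GenVCell 𝕜 nn Q b σ) ∧
    ((fun v : FlagStiefel 𝕜 nn Q H => fun k : Fin (Q + 1) => LinearMap.range (v.1 k).1.toLinearMap) ''
        GenVCell 𝕜 nn Q b σ) ∩
      ((fun v : FlagStiefel 𝕜 nn Q H => fun k : Fin (Q + 1) => LinearMap.range (v.1 k).1.toLinearMap) ''
        (closure (GenVCell 𝕜 nn Q b σ) \ GenVCell 𝕜 nn Q b σ)) = ∅ := by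
  haveI : CompleteSpace H := FiniteDimensional.complete 𝕜 H
  have hsub := genVCell_subset_DSet b σ
  have hclos : closure (GenVCell 𝕜 nn Q b σ) ⊆ DSet b σ :=
    closure_minimal hsub (isClosed_DSet b σ)
  constructor
  · intro v hv v' hv' heq
    exact flag_rigid b σ hσ v v' (hsub hv) hv' (fun k => congrFun heq k)
  · rw [Set.eq_empty_iff_forall_notMem]
    rintro x ⟨⟨v', hv', hx'⟩, ⟨v, ⟨hvc, hvn⟩, hx⟩⟩
    have hvv : v = v' := flag_rigid b σ hσ v v' (hclos hvc) hv'
      (fun k => congrFun (hx.trans hx'.symm) k)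
    exact hvn (hvv ▸ hv')
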